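/- Let k be a positive integer, let r and s be positive real numbers, and let w : ℝ → ℝ be a Horadam function with period k, i.e. w(x+2k) = r·w(x+k) + s·w(x) for all real x. Assume w(x) > 0 for all real x. Then w(x+k)/w(x) tends to ρ := (r + √(r² + 4s))/2 as x → ∞ (limit over the real numbers). -/

import Mathlib

theorem stmt_12 (k : ℕ) (hk : 0 < k) (r s : ℝ) (hr : 0 < r) (hs : 0 < s)
    (w : ℝ → ℝ)
    (hw : ∀ x : ℝ, w (x + 2 * (k : ℝ)) = r * w (x + (k : ℝ)) + s * w x)
    (hpos : ∀ x : ℝ, 0 < w x) :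
    Filter.Tendsto (fun x : ℝ => w (x + (k : ℝ)) / w x) Filter.atTop
      (nhds ((r + Real.sqrt (r ^ 2 + 4 * s)) / 2)) := by
  set ρ : ℝ := (r + Real.sqrt (r ^ 2 + 4 * s)) / 2 with hρdef
  have hd : Real.sqrt (r ^ 2 + 4 * s) ^ 2 = r ^ 2 + 4 * s :=
    Real.sq_sqrt (by positivity)
  have hρpos : 0 < ρ := by
    have h0 := Real.sqrt_nonneg (r ^ 2 + 4 * s)
    rw [hρdef]; positivity
  have hρ : ρ ^ 2 = r * ρ + s := by
    rw [hρdef]; field_simp; nlinarith [hd]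
  have hρ' : ρ = r + s / ρ := by
    field_simp
    linear_combination hρ
  set q : ℝ → ℝ := fun x => w (x + (k : ℝ)) / w x with hqdef
  have hq0 : ∀ x, 0 < q x := fun x => div_pos (hpos _) (hpos _)
  have hstep : ∀ x, q (x + (k : ℝ)) = r + s / q x := by
    intro x
    have h1 : x + (k : ℝ) + (k : ℝ) = x + 2 * (k : ℝ) := by ring
    have h2 := hw x
    have hwx := (hpos x).ne'
    have hwxk := (hpos (x + (k : ℝ))).ne'
    simp only [hqdef, h1, h2]
    field_simp
  have h2step : ∀ x, q (x + 2 * (k : ℝ)) = r + s / (r + s / q x) := by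
    intro x
    have h1 : x + 2 * (k : ℝ) = x + (k : ℝ) + (k : ℝ) := by ring
    rw [h1, hstep, hstep]
  set c : ℝ := s / ρ ^ 2 with hcdef
  have hc0 : 0 ≤ c := by positivity
  have hc1 : c < 1 := by
    rw [hcdef, div_lt_one (by positivity)]
    nlinarith
  have e1 : ∀ a : ℝ, 0 < a → |(r + s / a) - ρ| = s / (a * ρ) * |a - ρ| := by
    intro a ha
    have h2 : (r + s / a) - ρ = s / (a * ρ) * (ρ - a) := by
      conv_lhs => rw [hρ']
      field_simp
      ring
    rw [h2, abs_mul, abs_of_pos (show (0:ℝ) < s / (a * ρ) by positivity), abs_sub_comm]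
  have hcontr : ∀ t : ℝ, 0 < t → |r + s / (r + s / t) - ρ| ≤ c * |t - ρ| := by
    intro t ht
    have hu : 0 < r + s / t := by positivity
    rw [e1 _ hu, e1 _ ht, ← mul_assoc]
    apply mul_le_mul_of_nonneg_right _ (abs_nonneg _)
    have hco : s / ((r + s / t) * ρ) * (s / (t * ρ)) = s ^ 2 / ((r * t + s) * ρ ^ 2) := by
      field_simp
    rw [hco, hcdef, div_le_div_iff₀ (by positivity) (by positivity)]
    nlinarith [mul_pos (mul_pos hr ht) (pow_pos hρpos 2), mul_pos hs (pow_pos hρpos 2)]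
  set M : ℝ := r + s / r + ρ with hMdef
  have hM : ∀ x, |q (x + 2 * (k : ℝ)) - ρ| ≤ M := by
    intro x
    have hqx := hq0 x
    have hqk : r < r + s / q x := by
      have h3 : 0 < s / q x := by positivity
      linarith
    have hle : s / (r + s / q x) ≤ s / r := by
      gcongr
    have hgt : 0 < s / (r + s / q x) := by positivity
    rw [h2step x, abs_le]
    constructor
    · nlinarith
    · nlinarith
  have key : ∀ n : ℕ, ∀ x : ℝ, 0 ≤ x →
      |q (x + 2 * (k : ℝ) + 2 * (k : ℝ) * n) - ρ| ≤ c ^ n * M := by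
    intro n
    induction n with
    | zero => intro x hx; simpa using hM x
    | succ n ih =>
      intro x hx
      have h1 : x + 2 * (k : ℝ) + 2 * (k : ℝ) * ((n : ℕ) + 1 : ℕ) =
          (x + 2 * (k : ℝ) + 2 * (k : ℝ) * n) + 2 * (k : ℝ) := by push_cast; ring
      rw [h1, h2step]
      calc |r + s / (r + s / q (x + 2 * (k : ℝ) + 2 * (k : ℝ) * n)) - ρ|
          ≤ c * |q (x + 2 * (k : ℝ) + 2 * (k : ℝ) * n) - ρ| := hcontr _ (hq0 _)
        _ ≤ c * (c ^ n * M) := mul_le_mul_of_nonneg_left (ih x hx) hc0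
        _ = c ^ (n + 1) * M := by ring
  have htend : Filter.Tendsto (fun n : ℕ => c ^ n * M) Filter.atTop (nhds 0) := by
    have h := tendsto_pow_atTop_nhds_zero_of_lt_one hc0 hc1
    simpa using h.mul_const M
  rw [Metric.tendsto_atTop]
  intro ε hε
  obtain ⟨n, hn⟩ := (htend.eventually (gt_mem_nhds hε)).exists
  refine ⟨2 * (k : ℝ) + 2 * (k : ℝ) * n + 1, fun x hx => ?_⟩
  have h := key n (x - 2 * (k : ℝ) - 2 * (k : ℝ) * n) (by
    have hkk : (0:ℝ) ≤ (k : ℝ) := by positivity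
    linarith)
  rw [show x - 2 * (k : ℝ) - 2 * (k : ℝ) * n + 2 * (k : ℝ) + 2 * (k : ℝ) * n = x by ring] at h
  have hdist : dist (q x) ρ = |q x - ρ| := Real.dist_eq _ _
  rw [hdist]
  exact lt_of_le_of_lt h hn
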